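/- Let λ be a complex number on the unit circle, λ = e^{2πiθ}. In the noncommutative torus algebra generated by unitaries U, V with UV = λVU, set x̂ = U - U*, ŷ = V - V*, ẑ = UV* - U*V, and z = UV* + U*V. Then x̂² + ŷ² - λ̄ẑ² - x̂zŷ = 2(λ̄² - 1)·1. -/

import Mathlib

/-- In the noncommutative torus algebra generated by unitaries `U`, `V`
with `U*V = λ•(V*U)` for a unimodular `λ`, the elements `x̂ = U - U*`, `ŷ = V - V*`,
`ẑ = UV* - U*V` and `z = UV* + U*V` satisfy
`x̂² + ŷ² - λ̄•ẑ² - x̂*z*ŷ = 2(λ̄² - 1)•1`. -/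
theorem noncommutative_pillow_identity
    (A : Type*) [Ring A] [Algebra ℂ A] [StarRing A]
    (lam : ℂ) (hlam : ‖lam‖ = 1)
    (U V : A)
    (hU : U * star U = 1) (hU' : star U * U = 1)
    (hV : V * star V = 1) (hV' : star V * V = 1)
    (hUV : U * V = lam • (V * U)) :
    (U - star U) ^ 2 + (V - star V) ^ 2
      - (starRingEnd ℂ lam) • (U * star V - star U * V) ^ 2
      - (U - star U) * (U * star V + star U * V) * (V - star V)
    = (2 * ((starRingEnd ℂ lam) ^ 2 - 1)) • (1 : A) := by
  set c := starRingEnd ℂ lam with hcdef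
  have hc : c * lam = 1 := by
    rw [hcdef, Complex.conj_mul', hlam]; norm_num
  have e1 : star V * U = lam • (U * star V) := by
    calc star V * U = star V * U * (V * star V) := by rw [hV]; noncomm_ring
    _ = star V * (U * V) * star V := by noncomm_ring
    _ = lam • (star V * (V * U) * star V) := by
        rw [hUV]; simp [mul_smul_comm, smul_mul_assoc, mul_assoc]
    _ = lam • (U * star V) := by
        congr 1
        calc star V * (V * U) * star V = (star V * V) * (U * star V) := by noncomm_ring
        _ = U * star V := by rw [hV']; noncomm_ring
  have h1 : U * star V = c • (star V * U) := by
    rw [e1, smul_smul, hc, one_smul]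
  have e2 : V * star U = lam • (star U * V) := by
    calc V * star U = (star U * U) * (V * star U) := by rw [hU']; noncomm_ring
    _ = star U * (U * V) * star U := by noncomm_ring
    _ = lam • (star U * (V * U) * star U) := by
        rw [hUV]; simp [mul_smul_comm, smul_mul_assoc, mul_assoc]
    _ = lam • (star U * V) := by
        congr 1
        calc star U * (V * U) * star U = (star U * V) * (U * star U) := by noncomm_ring
        _ = star U * V := by rw [hU]; noncomm_ring
  have h2 : star U * V = c • (V * star U) := by
    rw [e2, smul_smul, hc, one_smul]
  -- monomial normal forms
  have p1 : (U * star V) * (U * star V) = (c*c*c) • (star V * star V * (U * U)) := by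
    have inner : star V * U * (star V * U) = c • (star V * star V * (U * U)) := by
      calc star V * U * (star V * U) = star V * (U * star V) * U := by noncomm_ring
      _ = star V * (c • (star V * U)) * U := by rw [← h1]
      _ = c • (star V * star V * (U * U)) := by
          rw [mul_smul_comm, smul_mul_assoc]; congr 1; noncomm_ring
    rw [h1, smul_mul_assoc, mul_smul_comm, smul_smul, inner, smul_smul]
  have p2 : (U * star V) * (star U * V) = c • (1 : A) := by
    rw [h1, smul_mul_assoc]
    congr 1
    calc star V * U * (star U * V) = star V * (U * star U) * V := by noncomm_ring
    _ = star V * V := by rw [hU]; noncomm_ring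
    _ = 1 := hV'
  have p3 : (star U * V) * (U * star V) = c • (1 : A) := by
    rw [h2, smul_mul_assoc]
    congr 1
    calc V * star U * (U * star V) = V * (star U * U) * star V := by noncomm_ring
    _ = V * star V := by rw [hU']; noncomm_ring
    _ = 1 := hV
  have p4 : (star U * V) * (star U * V) = (c*c*c) • (V * V * (star U * star U)) := by
    have inner : V * star U * (V * star U) = c • (V * V * (star U * star U)) := by
      calc V * star U * (V * star U) = V * (star U * V) * star U := by noncomm_ring
      _ = V * (c • (V * star U)) * star U := by rw [← h2]
      _ = c • (V * V * (star U * star U)) := by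
          rw [mul_smul_comm, smul_mul_assoc]; congr 1; noncomm_ring
    rw [h2, smul_mul_assoc, mul_smul_comm, smul_smul, inner, smul_smul]
  have q1 : U * U * (star V * star V) = (c * (c*c*c)) • (star V * star V * (U * U)) := by
    calc U * U * (star V * star V) = U * (U * star V) * star V := by noncomm_ring
    _ = U * (c • (star V * U)) * star V := by rw [← h1]
    _ = c • ((U * star V) * (U * star V)) := by
        rw [mul_smul_comm, smul_mul_assoc]; congr 1; noncomm_ring
    _ = (c * (c*c*c)) • (star V * star V * (U * U)) := by rw [p1, smul_smul]
  have q2 : star U * star U * (V * V) = (c * (c*c*c)) • (V * V * (star U * star U)) := by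
    calc star U * star U * (V * V) = star U * (star U * V) * V := by noncomm_ring
    _ = star U * (c • (V * star U)) * V := by rw [← h2]
    _ = c • ((star U * V) * (star U * V)) := by
        rw [mul_smul_comm, smul_mul_assoc]; congr 1; noncomm_ring
    _ = (c * (c*c*c)) • (V * V * (star U * star U)) := by rw [p4, smul_smul]
  have hx2 : (U - star U) ^ 2 = U*U + star U * star U - 1 - 1 := by
    have h : (U - star U) ^ 2 = U*U - U*star U - star U*U + star U*star U := by noncomm_ring
    rw [h, hU, hU']; abel
  have hy2 : (V - star V) ^ 2 = V*V + star V * star V - 1 - 1 := by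
    have h : (V - star V) ^ 2 = V*V - V*star V - star V*V + star V*star V := by noncomm_ring
    rw [h, hV, hV']; abel
  have hz2 : (U * star V - star U * V) ^ 2
      = (c*c*c) • (star V * star V * (U * U)) - c • (1:A) - c • (1:A)
        + (c*c*c) • (V * V * (star U * star U)) := by
    have h : (U * star V - star U * V) ^ 2
        = (U * star V) * (U * star V) - (U * star V) * (star U * V)
          - (star U * V) * (U * star V) + (star U * V) * (star U * V) := by noncomm_ring
    rw [h, p1, p2, p3, p4]
  have mid : (U - star U) * (U * star V + star U * V)
      = U*U*star V + V - star V - star U * star U * V := by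
    have h : (U - star U) * (U * star V + star U * V)
        = U*U*star V + (U*star U)*V - (star U*U)*star V - star U*star U*V := by noncomm_ring
    rw [h, hU, hU']; noncomm_ring
  have hxzy : (U - star U) * (U * star V + star U * V) * (V - star V)
      = U*U - (c*(c*c*c)) • (star V * star V * (U*U)) + V*V - 1 - 1 + star V * star V
        - (c*(c*c*c)) • (V * V * (star U * star U)) + star U * star U := by
    rw [mid]
    have expand : (U*U*star V + V - star V - star U * star U * V) * (V - star V)
        = U*U*(star V*V) - U*U*(star V*star V) + V*V - V*star V - star V*V
          + star V*star V - star U*star U*(V*V) + star U*star U*(V*star V) := by noncomm_ring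
    rw [expand, hV, hV', q1, q2]
    simp only [mul_one]
  rw [hx2, hy2, hz2, hxzy]
  match_scalars <;> ring
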